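/- arXiv:2604.02925 — 2 statements merged into one kernel-verified Lean document; each statement's English description precedes it below -/
import Mathlib

section
/- The planar-to-sphere exponential map f : ℝ² → ℝ³ defined by f(x) = ((sin‖x‖/‖x‖)·x₁, (sin‖x‖/‖x‖)·x₂, cos‖x‖) for x ≠ 0 and f(0) = (0,0,1) is 1-Lipschitz on the closed disk of radius π centered at the origin. -/
open Real Metric
open scoped Classical

/-- The exponential map of the unit sphere at the north pole `(0,0,1)`, written in
coordinates: `f x = ((sin ‖x‖ / ‖x‖) • x₁, (sin ‖x‖ / ‖x‖) • x₂, cos ‖x‖)` for `x ≠ 0`,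
and `f 0 = (0, 0, 1)`. -/
noncomputable def sphereExp (x : EuclideanSpace ℝ (Fin 2)) : EuclideanSpace ℝ (Fin 3) :=
  if x = 0 then (WithLp.equiv 2 (Fin 3 → ℝ)).symm ![0, 0, 1]
  else (WithLp.equiv 2 (Fin 3 → ℝ)).symm
    ![(Real.sin ‖x‖ / ‖x‖) * x 0, (Real.sin ‖x‖ / ‖x‖) * x 1, Real.cos ‖x‖]

lemma sphereExp_eq (x : EuclideanSpace ℝ (Fin 2)) :
    sphereExp x = (WithLp.equiv 2 (Fin 3 → ℝ)).symm
      ![(Real.sin ‖x‖ / ‖x‖) * x 0, (Real.sin ‖x‖ / ‖x‖) * x 1, Real.cos ‖x‖] := by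
  unfold sphereExp
  split_ifs with h
  · subst h
    simp
  · rfl

lemma key_ineq {a b p : ℝ} (ha0 : 0 ≤ a) (haπ : a ≤ π) (hb0 : 0 ≤ b) (hbπ : b ≤ π)
    (hp : p ≤ a * b) :
    2 - 2 * (Real.cos a * Real.cos b) - 2 * ((Real.sin a / a) * (Real.sin b / b)) * p
      ≤ a ^ 2 + b ^ 2 - 2 * p := by
  have hcos : 1 - (a - b) ^ 2 / 2 ≤ Real.cos (a - b) := Real.one_sub_sq_div_two_le_cos
  have hcab : Real.cos (a - b) = Real.cos a * Real.cos b + Real.sin a * Real.sin b :=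
    Real.cos_sub a b
  have hsa : Real.sin a ≤ a := Real.sin_le ha0
  have hsb : Real.sin b ≤ b := Real.sin_le hb0
  have hsa0 : 0 ≤ Real.sin a := Real.sin_nonneg_of_nonneg_of_le_pi ha0 haπ
  have hsb0 : 0 ≤ Real.sin b := Real.sin_nonneg_of_nonneg_of_le_pi hb0 hbπ
  rcases eq_or_lt_of_le ha0 with rfl | ha
  · have hp0 : p ≤ 0 := by simpa using hp
    have h := Real.one_sub_sq_div_two_le_cos (x := b)
    simp only [Real.sin_zero, Real.cos_zero, zero_div, zero_mul, mul_zero, one_mul]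
    nlinarith [h, hp0]
  rcases eq_or_lt_of_le hb0 with rfl | hb
  · have hp0 : p ≤ 0 := by simpa using hp
    have h := Real.one_sub_sq_div_two_le_cos (x := a)
    simp only [Real.sin_zero, Real.cos_zero, div_zero, mul_zero, zero_mul, mul_one]
    nlinarith [h, hp0]
  set k : ℝ := (Real.sin a / a) * (Real.sin b / b) with hk
  have hk0 : 0 ≤ k := by positivity
  have hk1 : k ≤ 1 := by
    rw [hk]
    calc Real.sin a / a * (Real.sin b / b) ≤ 1 * 1 := by
          apply mul_le_mul _ _ (by positivity) zero_le_one
          · exact div_le_one_of_le₀ hsa ha0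
          · exact div_le_one_of_le₀ hsb hb0
      _ = 1 := by ring
  have hkab : k * (a * b) = Real.sin a * Real.sin b := by
    rw [hk]; field_simp
  nlinarith [mul_nonneg (sub_nonneg.2 hk1) (sub_nonneg.2 hp)]

/-- The planar-to-sphere exponential map is 1-Lipschitz on the closed disk of
radius π centered at the origin. -/
theorem sphereExp_lipschitzOnWith_one :
    LipschitzOnWith 1 sphereExp (Metric.closedBall (0 : EuclideanSpace ℝ (Fin 2)) π) := by
  apply LipschitzOnWith.of_dist_le_mul
  intro x hx y hy
  rw [NNReal.coe_one, one_mul]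
  simp only [Metric.mem_closedBall, dist_zero_right] at hx hy
  have ha0 : (0:ℝ) ≤ ‖x‖ := norm_nonneg x
  have hb0 : (0:ℝ) ≤ ‖y‖ := norm_nonneg y
  -- reduce to squares
  rw [← Real.sqrt_sq dist_nonneg, ← Real.sqrt_sq (dist_nonneg (x := x) (y := y))]
  apply Real.sqrt_le_sqrt
  have hCS : (x 0) * (y 0) + (x 1) * (y 1) ≤ ‖x‖ * ‖y‖ := by
    have h := real_inner_le_norm x y
    rw [PiLp.inner_apply, Fin.sum_univ_two] at h
    simpa [mul_comm] using h
  have hnx : x 0 ^ 2 + x 1 ^ 2 = ‖x‖ ^ 2 := by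
    rw [EuclideanSpace.norm_eq, Real.sq_sqrt (by positivity), Fin.sum_univ_two, Real.norm_eq_abs, Real.norm_eq_abs, sq_abs, sq_abs]
  have hny : y 0 ^ 2 + y 1 ^ 2 = ‖y‖ ^ 2 := by
    rw [EuclideanSpace.norm_eq, Real.sq_sqrt (by positivity), Fin.sum_univ_two, Real.norm_eq_abs, Real.norm_eq_abs, sq_abs, sq_abs]
  have hsinmul : ∀ t : ℝ, Real.sin t / t * t = Real.sin t := by
    intro t
    rcases eq_or_ne t 0 with rfl | ht
    · simp
    · field_simp
  have hdxy : dist x y ^ 2 = (x 0 - y 0) ^ 2 + (x 1 - y 1) ^ 2 := by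
    rw [EuclideanSpace.dist_eq, Real.sq_sqrt (by positivity), Fin.sum_univ_two,
      Real.dist_eq, Real.dist_eq, sq_abs, sq_abs]
  have hdf : dist (sphereExp x) (sphereExp y) ^ 2 =
      2 - 2 * (Real.cos ‖x‖ * Real.cos ‖y‖) -
        2 * ((Real.sin ‖x‖ / ‖x‖) * (Real.sin ‖y‖ / ‖y‖)) * ((x 0) * (y 0) + (x 1) * (y 1)) := by
    rw [sphereExp_eq x, sphereExp_eq y, EuclideanSpace.dist_eq,
      Real.sq_sqrt (by positivity), Fin.sum_univ_three]
    simp only [WithLp.equiv_symm_apply, PiLp.toLp_apply, Matrix.cons_val_zero, Matrix.cons_val_one,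
      Matrix.head_cons, Matrix.cons_val_two, Matrix.tail_cons, Real.dist_eq, sq_abs]
    have e1 : (Real.sin ‖x‖ / ‖x‖) ^ 2 * (x 0 ^ 2 + x 1 ^ 2) = Real.sin ‖x‖ ^ 2 := by
      rw [hnx, ← mul_pow, hsinmul]
    have e2 : (Real.sin ‖y‖ / ‖y‖) ^ 2 * (y 0 ^ 2 + y 1 ^ 2) = Real.sin ‖y‖ ^ 2 := by
      rw [hny, ← mul_pow, hsinmul]
    linear_combination e1 + e2 + Real.sin_sq_add_cos_sq ‖x‖ + Real.sin_sq_add_cos_sq ‖y‖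
  rw [hdf, hdxy]
  have := key_ineq ha0 hx hb0 hy hCS
  nlinarith [this, hnx, hny]
end

section
/- There exists a map f : ℝ² → ℝ³ that is 1-Lipschitz on the closed disk of radius π centered at the origin and whose image of that closed disk is exactly the unit sphere {y ∈ ℝ³ : ‖y‖ = 1}. -/
open Real


private lemma two_sub_two_cos (u : ℝ) : 2 - 2 * Real.cos u ≤ u ^ 2 := by
  have := Real.one_sub_sq_div_two_le_cos (x := u)
  linarith

private lemma core0 (y0 y1 s : ℝ) (hs0 : 0 ≤ s) (hs2 : s ^ 2 = y0 ^ 2 + y1 ^ 2) :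
    (Real.sin s / s * y0) ^ 2 + (Real.sin s / s * y1) ^ 2 + (1 - Real.cos s) ^ 2
      ≤ y0 ^ 2 + y1 ^ 2 := by
  rcases hs0.eq_or_lt with h | hs
  · have h0 : y0 = 0 := by nlinarith [sq_nonneg y0, sq_nonneg y1]
    have h1 : y1 = 0 := by nlinarith [sq_nonneg y0, sq_nonneg y1]
    simp [← h, h0, h1]
  · have hb2 : (Real.sin s / s) ^ 2 * (y0 ^ 2 + y1 ^ 2) = Real.sin s ^ 2 := by
      rw [← hs2, div_pow, div_mul_cancel₀ _ (pow_ne_zero 2 hs.ne')]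
    nlinarith [hb2, Real.sin_sq_add_cos_sq s, two_sub_two_cos s, hs2]

private lemma coreineq (x0 x1 y0 y1 r s : ℝ) (hr0 : 0 ≤ r) (hs0 : 0 ≤ s)
    (hrπ : r ≤ π) (hsπ : s ≤ π)
    (hr2 : r ^ 2 = x0 ^ 2 + x1 ^ 2) (hs2 : s ^ 2 = y0 ^ 2 + y1 ^ 2) :
    (Real.sin r / r * x0 - Real.sin s / s * y0) ^ 2
      + (Real.sin r / r * x1 - Real.sin s / s * y1) ^ 2
      + (Real.cos r - Real.cos s) ^ 2
      ≤ (x0 - y0) ^ 2 + (x1 - y1) ^ 2 := by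
  rcases hr0.eq_or_lt with h | hr
  · have h0 : x0 = 0 := by nlinarith [sq_nonneg x0, sq_nonneg x1]
    have h1 : x1 = 0 := by nlinarith [sq_nonneg x0, sq_nonneg x1]
    subst h0 h1
    have := core0 y0 y1 s hs0 hs2
    rw [← h]
    simp only [Real.cos_zero]
    nlinarith [this]
  rcases hs0.eq_or_lt with h | hs
  · have h0 : y0 = 0 := by nlinarith [sq_nonneg y0, sq_nonneg y1]
    have h1 : y1 = 0 := by nlinarith [sq_nonneg y0, sq_nonneg y1]
    subst h0 h1
    have := core0 x0 x1 r hr0 hr2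
    rw [← h]
    simp only [Real.cos_zero]
    nlinarith [this]
  · set a := Real.sin r / r with hadef
    set b := Real.sin s / s with hbdef
    have ha : a * r = Real.sin r := div_mul_cancel₀ _ hr.ne'
    have hb : b * s = Real.sin s := div_mul_cancel₀ _ hs.ne'
    have ha2 : a ^ 2 * (x0 ^ 2 + x1 ^ 2) = Real.sin r ^ 2 := by
      rw [← hr2, hadef, div_pow, div_mul_cancel₀ _ (pow_ne_zero 2 hr.ne')]
    have hb2 : b ^ 2 * (y0 ^ 2 + y1 ^ 2) = Real.sin s ^ 2 := by
      rw [← hs2, hbdef, div_pow, div_mul_cancel₀ _ (pow_ne_zero 2 hs.ne')]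
    have ha1 : a ≤ 1 := (div_le_one hr).2 (Real.sin_le hr.le)
    have ha0 : 0 ≤ a :=
      div_nonneg (Real.sin_nonneg_of_nonneg_of_le_pi hr.le hrπ) hr.le
    have hb1 : b ≤ 1 := (div_le_one hs).2 (Real.sin_le hs.le)
    have hb0 : 0 ≤ b :=
      div_nonneg (Real.sin_nonneg_of_nonneg_of_le_pi hs.le hsπ) hs.le
    have ht : x0 * y0 + x1 * y1 ≤ r * s := by
      nlinarith [sq_nonneg (x0 * y1 - x1 * y0), sq_nonneg (r * s - (x0 * y0 + x1 * y1)),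
        sq_nonneg (r * s + (x0 * y0 + x1 * y1)), mul_nonneg hr.le hs.le]
    have habrs : a * b * (r * s) = Real.sin r * Real.sin s := by
      calc a * b * (r * s) = (a * r) * (b * s) := by ring
        _ = Real.sin r * Real.sin s := by rw [ha, hb]
    have hab1 : a * b ≤ 1 := by
      nlinarith [mul_nonneg (sub_nonneg.2 ha1) hb0]
    have hprod : 0 ≤ (1 - a * b) * (r * s - (x0 * y0 + x1 * y1)) :=
      mul_nonneg (by linarith) (by linarith)
    have h5 : a * b * (x0 * y0 + x1 * y1)
        ≥ (x0 * y0 + x1 * y1) - r * s + Real.sin r * Real.sin s := by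
      linarith [hprod, habrs]
    have h6 : 2 - 2 * (Real.cos r * Real.cos s) - 2 * (Real.sin r * Real.sin s)
        ≤ r ^ 2 + s ^ 2 - 2 * (r * s) := by
      have h1 := two_sub_two_cos (r - s)
      have hcs := Real.cos_sub r s
      linarith [h1, hcs, sq_nonneg (r-s)]
    have e1 : (a * x0 - b * y0) ^ 2 + (a * x1 - b * y1) ^ 2 + (Real.cos r - Real.cos s) ^ 2
        = Real.sin r ^ 2 + Real.sin s ^ 2 + Real.cos r ^ 2 + Real.cos s ^ 2
          - 2 * (Real.cos r * Real.cos s) - 2 * (a * b * (x0 * y0 + x1 * y1)) := by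
      linear_combination ha2 + hb2
    have hexp : (x0 - y0) ^ 2 + (x1 - y1) ^ 2
        = r ^ 2 + s ^ 2 - 2 * (x0 * y0 + x1 * y1) := by
      linear_combination -hr2 - hs2
    rw [e1, hexp]
    have e2 := Real.sin_sq_add_cos_sq r
    have e3 := Real.sin_sq_add_cos_sq s
    linarith [h5, h6, e2, e3]


noncomputable def myf (x : EuclideanSpace ℝ (Fin 2)) : EuclideanSpace ℝ (Fin 3) :=
  WithLp.toLp 2 ![Real.sin ‖x‖ / ‖x‖ * x 0, Real.sin ‖x‖ / ‖x‖ * x 1, Real.cos ‖x‖]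

lemma norm_sq_two (x : EuclideanSpace ℝ (Fin 2)) : ‖x‖ ^ 2 = (x 0) ^ 2 + (x 1) ^ 2 := by
  rw [EuclideanSpace.norm_eq, Fin.sum_univ_two, Real.sq_sqrt (by positivity)]
  simp [sq_abs]

lemma myf_lip (x y : EuclideanSpace ℝ (Fin 2)) (hx : ‖x‖ ≤ π) (hy : ‖y‖ ≤ π) :
    dist (myf x) (myf y) ≤ dist x y := by
  rw [EuclideanSpace.dist_eq, EuclideanSpace.dist_eq, Fin.sum_univ_three, Fin.sum_univ_two]
  apply Real.sqrt_le_sqrt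
  simp only [Real.dist_eq, sq_abs, myf, PiLp.toLp_apply, Matrix.cons_val_zero, Matrix.cons_val_one,
    Matrix.head_cons, Matrix.cons_val_two, Matrix.tail_cons]
  have hx2 := norm_sq_two x
  have hy2 := norm_sq_two y
  exact coreineq (x 0) (x 1) (y 0) (y 1) _ _ (norm_nonneg x) (norm_nonneg y) hx hy hx2 hy2

lemma myf_norm (x : EuclideanSpace ℝ (Fin 2)) : ‖myf x‖ = 1 := by
  rw [EuclideanSpace.norm_eq, Fin.sum_univ_three]
  simp only [myf, PiLp.toLp_apply, Matrix.cons_val_zero, Matrix.cons_val_one, Matrix.head_cons,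
    Matrix.cons_val_two, Matrix.tail_cons, Real.norm_eq_abs, sq_abs]
  rcases eq_or_ne ‖x‖ 0 with h | h
  · have hx : x = 0 := norm_eq_zero.mp h
    subst hx
    norm_num [h]
  · have hr2 := norm_sq_two x
    have ha2 : (Real.sin ‖x‖ / ‖x‖) ^ 2 * ((x 0) ^ 2 + (x 1) ^ 2) = Real.sin ‖x‖ ^ 2 := by
      rw [← hr2, div_pow, div_mul_cancel₀ _ (pow_ne_zero 2 h)]
    have : (Real.sin ‖x‖ / ‖x‖ * x 0) ^ 2 + (Real.sin ‖x‖ / ‖x‖ * x 1) ^ 2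
        + Real.cos ‖x‖ ^ 2 = 1 := by
      linear_combination ha2 + Real.sin_sq_add_cos_sq ‖x‖
    rw [this, Real.sqrt_one]



lemma sq_inj {a b : ℝ} (ha : 0 ≤ a) (hb : 0 ≤ b) (h : a ^ 2 = b ^ 2) : a = b := by
  rw [← Real.sqrt_sq ha, h, Real.sqrt_sq hb]

lemma norm_sq_three (y : EuclideanSpace ℝ (Fin 3)) :
    ‖y‖ ^ 2 = (y 0) ^ 2 + (y 1) ^ 2 + (y 2) ^ 2 := by
  rw [EuclideanSpace.norm_eq, Fin.sum_univ_three, Real.sq_sqrt (by positivity)]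
  simp [sq_abs]

lemma surj (y : EuclideanSpace ℝ (Fin 3)) (hy : ‖y‖ = 1) :
    ∃ x ∈ Metric.closedBall (0 : EuclideanSpace ℝ (Fin 2)) π, myf x = y := by
  have hy2 : (y 0) ^ 2 + (y 1) ^ 2 + (y 2) ^ 2 = 1 := by
    rw [← norm_sq_three, hy]; norm_num
  set c := y 2 with hc
  have hc2 : c ^ 2 ≤ 1 := by nlinarith [sq_nonneg (y 0), sq_nonneg (y 1)]
  have hcl : -1 ≤ c := by nlinarith [sq_nonneg (c + 1)]
  have hcu : c ≤ 1 := by nlinarith [sq_nonneg (c - 1)]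
  set r := Real.arccos c with hrdef
  have hcr : Real.cos r = c := Real.cos_arccos hcl hcu
  have hr0 : 0 ≤ r := Real.arccos_nonneg c
  have hrπ : r ≤ π := Real.arccos_le_pi c
  have hm : (y 0) ^ 2 + (y 1) ^ 2 = 1 - c ^ 2 := by linarith
  have hsr : Real.sin r = Real.sqrt ((y 0) ^ 2 + (y 1) ^ 2) := by
    rw [Real.sin_arccos, hm]
  have hsr2 : Real.sin r ^ 2 = (y 0) ^ 2 + (y 1) ^ 2 := by
    rw [hsr, Real.sq_sqrt (by positivity)]
  rcases eq_or_lt_of_le (by positivity : (0:ℝ) ≤ (y 0) ^ 2 + (y 1) ^ 2) with hz | hz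
  · -- poles
    have h0 : y 0 = 0 := by nlinarith [sq_nonneg (y 0), sq_nonneg (y 1)]
    have h1 : y 1 = 0 := by nlinarith [sq_nonneg (y 0), sq_nonneg (y 1)]
    have hcc : (c - 1) * (c + 1) = 0 := by nlinarith
    rcases mul_eq_zero.mp hcc with h | h
    · -- c = 1 : north pole
      refine ⟨0, Metric.mem_closedBall_self Real.pi_pos.le, ?_⟩
      ext i
      fin_cases i
      · show Real.sin ‖(0 : EuclideanSpace ℝ (Fin 2))‖ / _ * _ = y 0
        rw [h0]
        simp
      · show Real.sin ‖(0 : EuclideanSpace ℝ (Fin 2))‖ / _ * _ = y 1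
        rw [h1]
        simp
      · show Real.cos ‖(0 : EuclideanSpace ℝ (Fin 2))‖ = y 2
        rw [norm_zero, Real.cos_zero, ← hc]
        linarith
    · -- c = -1 : south pole
      set xS : EuclideanSpace ℝ (Fin 2) := WithLp.toLp 2 ![π, 0] with hxS
      have hn : ‖xS‖ = π := by
        apply sq_inj (norm_nonneg _) Real.pi_pos.le
        rw [norm_sq_two]
        show π ^ 2 + (0:ℝ) ^ 2 = π ^ 2
        ring
      refine ⟨xS, ?_, ?_⟩
      · rw [Metric.mem_closedBall, dist_zero_right, hn]
      · ext i
        fin_cases i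
        · show Real.sin ‖xS‖ / ‖xS‖ * xS 0 = y 0
          rw [hn, Real.sin_pi, h0]
          simp
        · show Real.sin ‖xS‖ / ‖xS‖ * xS 1 = y 1
          rw [hn, Real.sin_pi, h1]
          simp
        · show Real.cos ‖xS‖ = y 2
          rw [hn, Real.cos_pi, ← hc]
          linarith
  · -- generic point
    have hsinpos : 0 < Real.sin r := by
      rw [hsr]; exact Real.sqrt_pos.2 hz
    set x : EuclideanSpace ℝ (Fin 2) := WithLp.toLp 2 ![r / Real.sin r * y 0, r / Real.sin r * y 1] with hxdef
    have hx0 : x 0 = r / Real.sin r * y 0 := rfl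
    have hx1 : x 1 = r / Real.sin r * y 1 := rfl
    have hxn : ‖x‖ = r := by
      apply sq_inj (norm_nonneg _) hr0
      rw [norm_sq_two, hx0, hx1]
      have : (r / Real.sin r * y 0) ^ 2 + (r / Real.sin r * y 1) ^ 2
          = (r / Real.sin r) ^ 2 * ((y 0) ^ 2 + (y 1) ^ 2) := by ring
      rw [this, ← hsr2, div_pow, div_mul_cancel₀ _ (pow_ne_zero 2 hsinpos.ne')]
    refine ⟨x, ?_, ?_⟩
    · rw [Metric.mem_closedBall, dist_zero_right, hxn]; exact hrπ
    · have hrne : r ≠ 0 := by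
        intro h
        rw [h, Real.sin_zero] at hsinpos
        exact lt_irrefl 0 hsinpos
      ext i
      fin_cases i
      · show Real.sin ‖x‖ / ‖x‖ * x 0 = y 0
        rw [hxn, hx0]
        field_simp
      · show Real.sin ‖x‖ / ‖x‖ * x 1 = y 1
        rw [hxn, hx1]
        field_simp
      · show Real.cos ‖x‖ = y 2
        rw [hxn, hcr]


open Metric in
/-- There is a map ℝ² → ℝ³ that is 1-Lipschitz on the closed disk of radius π centered
at the origin and maps that closed disk exactly onto the unit sphere of ℝ³. -/
theorem exists_lipschitzOnWith_one_image_closedBall_eq_unitSphere :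
    ∃ f : EuclideanSpace ℝ (Fin 2) → EuclideanSpace ℝ (Fin 3),
      LipschitzOnWith 1 f (Metric.closedBall (0 : EuclideanSpace ℝ (Fin 2)) π) ∧
      f '' Metric.closedBall (0 : EuclideanSpace ℝ (Fin 2)) π
        = {y : EuclideanSpace ℝ (Fin 3) | ‖y‖ = 1} := by
  refine ⟨myf, ?_, ?_⟩
  · apply LipschitzOnWith.of_dist_le_mul
    intro x hx y hy
    rw [NNReal.coe_one, one_mul]
    exact myf_lip x y (mem_closedBall_zero_iff.mp hx) (mem_closedBall_zero_iff.mp hy)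
  · ext y
    constructor
    · rintro ⟨x, -, rfl⟩
      exact myf_norm x
    · intro hy
      obtain ⟨x, hx, hfx⟩ := surj y hy
      exact ⟨x, hx, hfx⟩
end
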